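/- Let Λ' be a clean sublattice of finite index N in a lattice Λ ⊂ ℝ^L, and let V0 = {λ ∈ Λ : ‖λ‖ < ‖λ − s‖ for all nonzero s ∈ Λ'}. Then V0 contains exactly one element from each coset of Λ' in Λ; in particular |V0| = N. -/

import Mathlib

/-- `Λ` is a (full-rank) lattice in `ℝ^L`: the `ℤ`-span of the rows of an invertible
real `L × L` matrix, i.e. the `ℤ`-span of an `ℝ`-basis. -/
def IsLattice {L : ℕ} (Λ : AddSubgroup (EuclideanSpace ℝ (Fin L))) : Prop :=
  ∃ b : Module.Basis (Fin L) ℝ (EuclideanSpace ℝ (Fin L)),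
    Λ = AddSubgroup.closure (Set.range ⇑b)

/-- `Λ'` is clean in `Λ`: every point of `Λ` has a unique nearest point of `Λ'`
in the Euclidean norm. -/
def IsClean {L : ℕ} (Λ Λ' : AddSubgroup (EuclideanSpace ℝ (Fin L))) : Prop :=
  ∀ x ∈ Λ, ∃! p, p ∈ Λ' ∧ ∀ q ∈ Λ', ‖x - p‖ ≤ ‖x - q‖

/-- The discrete Voronoi set `V0 = {λ ∈ Λ : ‖λ‖ < ‖λ - s‖ for all nonzero s ∈ Λ'}`. -/
def voronoiSet {L : ℕ} (Λ Λ' : AddSubgroup (EuclideanSpace ℝ (Fin L))) :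
    Set (EuclideanSpace ℝ (Fin L)) :=
  {x | x ∈ Λ ∧ ∀ s ∈ Λ', s ≠ 0 → ‖x‖ < ‖x - s‖}

theorem stmt1 {L : ℕ} (Λ Λ' : AddSubgroup (EuclideanSpace ℝ (Fin L)))
    (hΛ : IsLattice Λ) (hle : Λ' ≤ Λ) (N : ℕ) (hN : 0 < N)
    (hidx : (Λ'.addSubgroupOf Λ).index = N)
    (hclean : IsClean Λ Λ') :
    (∀ x ∈ Λ, ∃! v, v ∈ voronoiSet Λ Λ' ∧ v - x ∈ Λ') ∧
      (voronoiSet Λ Λ').ncard = N := by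
  have uniq : ∀ v ∈ voronoiSet Λ Λ', ∀ w ∈ voronoiSet Λ Λ', w - v ∈ Λ' → v = w := by
    intro v hv w hw hs
    by_contra hne
    have h1 := hv.2 (v - w) (by simpa using Λ'.neg_mem hs)
      (sub_ne_zero.mpr (fun h => hne h))
    have h2 := hw.2 (w - v) hs (sub_ne_zero.mpr (fun h => hne h.symm))
    rw [sub_sub_cancel] at h1 h2
    exact absurd (h1.trans h2) (lt_irrefl _)
  have main : ∀ x ∈ Λ, ∃! v, v ∈ voronoiSet Λ Λ' ∧ v - x ∈ Λ' := by
    intro x hx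
    obtain ⟨p, ⟨hpΛ', hpmin⟩, hpu⟩ := hclean x hx
    have hvmem : x - p ∈ voronoiSet Λ Λ' := by
      refine ⟨Λ.sub_mem hx (hle hpΛ'), ?_⟩
      intro s hs hs0
      have hq : p + s ∈ Λ' := Λ'.add_mem hpΛ' hs
      rcases lt_or_eq_of_le (hpmin (p + s) hq) with h | h
      · rw [sub_sub]; exact h
      · exfalso
        apply hs0
        have hps : p + s = p :=
          hpu (p + s) ⟨hq, fun q hq' => le_trans (le_of_eq h.symm) (hpmin q hq')⟩
        exact add_eq_left.mp hps
    refine ⟨x - p, ⟨hvmem, by simpa using Λ'.neg_mem hpΛ'⟩, ?_⟩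
    rintro w ⟨hw, hwx⟩
    have : w - (x - p) ∈ Λ' := by
      have e : w - (x - p) = (w - x) + p := by abel
      rw [e]; exact Λ'.add_mem hwx hpΛ'
    exact (uniq (x - p) hvmem w hw this).symm
  refine ⟨main, ?_⟩
  have hcard : Nat.card (voronoiSet Λ Λ') = Nat.card (Λ ⧸ Λ'.addSubgroupOf Λ) := by
    apply Nat.card_congr
    refine Equiv.ofBijective
      (fun v => QuotientAddGroup.mk (⟨(v : EuclideanSpace ℝ (Fin L)), v.2.1⟩ : Λ)) ⟨?_, ?_⟩
    · intro v w h
      rw [QuotientAddGroup.eq] at h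
      rw [AddSubgroup.mem_addSubgroupOf] at h
      have : (w : EuclideanSpace ℝ (Fin L)) - v ∈ Λ' := by
        simpa [neg_add_eq_sub] using h
      exact Subtype.ext (uniq v v.2 w w.2 this)
    · intro q
      induction q using QuotientAddGroup.induction_on with
      | H x =>
        obtain ⟨v, ⟨hv, hvx⟩, _⟩ := main x.1 x.2
        refine ⟨⟨v, hv⟩, ?_⟩
        rw [QuotientAddGroup.eq, AddSubgroup.mem_addSubgroupOf]
        simpa [neg_add_eq_sub] using Λ'.neg_mem hvx
  rw [← Nat.card_coe_set_eq, hcard, ← hidx]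
  rfl
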